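/- Define H(r, t, i) = C(r-1+i, r-1) + ∑_{j=1}^{m} (-1)^j C(r-1+i-tj, r-1) C(r+1, j) where m = min(⌊i/t⌋, r) and C(a,b) = 0 if a < b or a < 0. For k ≥ 2 and t ≥ k+1, setting c = k(t-1) - 1 and r = 2k, the inequality H(2k, t, c) ≥ H(2k, t, c+1) holds for all sufficiently large t. -/

import Mathlib

open Finset Polynomial Filter

/-- Eulerian numbers with integer second index. -/
def eul : ℕ → ℤ → ℤ
  | 0, m => if m = 0 then 1 else 0
  | (n+1), m => (m + 1) * eul n m + ((n : ℤ) + 1 - m) * eul n (m - 1)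

lemma eul_succ (n : ℕ) (m : ℤ) :
    eul (n+1) m = (m + 1) * eul n m + ((n : ℤ) + 1 - m) * eul n (m - 1) := rfl

lemma eul_neg : ∀ (n : ℕ) (m : ℤ), m < 0 → eul n m = 0
  | 0, m, h => by simp [eul]; omega
  | (n+1), m, h => by
      rw [eul_succ, eul_neg n m h, eul_neg n (m-1) (by omega)]; ring

lemma eul_zero : ∀ n : ℕ, eul n 0 = 1
  | 0 => by simp [eul]
  | (n+1) => by rw [eul_succ, eul_zero n, show (0:ℤ) - 1 = -1 from by ring, eul_neg n (-1) (by norm_num)]; ring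

lemma eul_zero_row (m : ℤ) (h : m ≠ 0) : eul 0 m = 0 := by simp [eul, h]

lemma eul_ge : ∀ (n : ℕ) (m : ℤ), (n : ℤ) ≤ m → 1 ≤ n → eul n m = 0
  | 0, _, _, h => absurd h (by norm_num)
  | (n+1), m, h2, _ => by
    rw [eul_succ]
    rcases Nat.eq_zero_or_pos n with rfl | hn
    · push_cast at h2
      rcases eq_or_lt_of_le h2 with h | h
      · rw [eul_zero_row m (by omega), ← h, show (1:ℤ) - 1 = 0 from by ring, eul_zero]; ring
      · rw [eul_zero_row m (by omega), eul_zero_row (m-1) (by omega)]; ring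
    · push_cast at h2
      rw [eul_ge n m (by push_cast; omega) hn, eul_ge n (m-1) (by push_cast; omega) hn]; ring

lemma eul_nonneg : ∀ (n : ℕ) (m : ℤ), 0 ≤ eul n m
  | 0, m => by rw [eul]; split <;> norm_num
  | (n+1), m => by
    rcases lt_or_ge m 0 with h | h
    · rw [eul_neg _ _ h]
    · rcases le_or_gt ((n:ℤ)+1) m with h2 | h2
      · rw [eul_ge (n+1) m (by push_cast; omega) (by omega)]
      · rw [eul_succ]
        have i1 := eul_nonneg n m
        have i2 := eul_nonneg n (m-1)
        have c1 : (0:ℤ) ≤ m + 1 := by omega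
        have c2 : (0:ℤ) ≤ (n:ℤ) + 1 - m := by omega
        nlinarith

lemma eul_symm : ∀ (n : ℕ), 1 ≤ n → ∀ m : ℤ, eul n m = eul n ((n:ℤ) - 1 - m)
  | (n+1), _, m => by
    rcases Nat.eq_zero_or_pos n with rfl | hn
    · have e0 : ((0+1:ℕ):ℤ) - 1 - m = -m := by push_cast; ring
      rw [e0]
      rcases lt_trichotomy m 0 with h | rfl | h
      · rw [eul_neg 1 m h, eul_ge 1 (-m) (by push_cast; omega) le_rfl]
      · norm_num
      · rw [eul_ge 1 m (by push_cast; omega) le_rfl, eul_neg 1 (-m) (by omega)]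
    · have h1 := eul_symm n hn (m-1)
      have h2 := eul_symm n hn m
      have e2 : ((n+1:ℕ):ℤ) - 1 - m - 1 = (n:ℤ) - 1 - m := by push_cast; ring
      have e1 : ((n+1:ℕ):ℤ) - 1 - m = (n:ℤ) - 1 - (m-1) := by push_cast; ring
      rw [eul_succ, eul_succ, e2, e1, ← h1, ← h2]
      push_cast
      ring

lemma eul_mono : ∀ (n : ℕ) (m : ℤ), -1 ≤ m → 2*(m+1) ≤ (n:ℤ) → eul n m ≤ eul n (m+1)
  | n, m, hm, hc => by
    rcases eq_or_lt_of_le hm with h | hm0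
    · rw [← h]
      norm_num [eul_neg n (-1) (by norm_num), eul_zero n, eul_nonneg]
    · have hm' : 0 ≤ m := by omega
      -- n ≥ 2, so n = n'+1
      obtain ⟨n', rfl⟩ : ∃ n', n = n' + 1 := by
        refine ⟨n - 1, ?_⟩
        have : (2:ℤ) ≤ (n:ℤ) := by omega
        omega
      have hcc : 2*(m+1) ≤ (n':ℤ) + 1 := by push_cast at hc; omega
      have hd2 : eul n' (m-1) ≤ eul n' (m-1+1) :=
        eul_mono n' (m-1) (by omega) (by omega)
      rw [show m - 1 + 1 = m from by ring] at hd2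
      rw [eul_succ, eul_succ, show m + 1 - 1 = m from by ring]
      rcases le_or_gt (2*(m+1)) (n':ℤ) with h | h
      · have hd1 : eul n' m ≤ eul n' (m+1) := eul_mono n' m (by omega) h
        have c1 : (0:ℤ) ≤ m + 2 := by omega
        have c2 : (0:ℤ) ≤ (n':ℤ) + 1 - m := by omega
        nlinarith
      · -- n' = 2m+1
        have hnm : (n':ℤ) = 2*m + 1 := by omega
        have hn1 : 1 ≤ n' := by omega
        have hs := eul_symm n' hn1 (m+1)
        have e3 : ((n':ℤ)) - 1 - (m+1) = m - 1 := by omega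
        rw [e3] at hs
        rw [hs]
        have : eul (n'+1) m = eul (n'+1) (m+1) := by
          rw [eul_succ, eul_succ, show m + 1 - 1 = m from by ring, hs]
          linear_combination (eul n' (m-1) - eul n' m) * hnm
        -- direct linear combination instead
        nlinarith [this]
  termination_by n m => n
lemma eul_zero_def (m : ℤ) : eul 0 m = if m = 0 then 1 else 0 := rfl

lemma eul_strict : ∀ (n : ℕ) (m : ℤ), -1 ≤ m → 2*m + 4 ≤ (n:ℤ) → eul n m + 1 ≤ eul n (m+1)
  | n, m, hm, hc => by
    rcases eq_or_lt_of_le hm with h | hm0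
    · rw [← h]
      norm_num [eul_neg n (-1) (by norm_num), eul_zero n]
    · have hm' : 0 ≤ m := by omega
      obtain ⟨n', rfl⟩ : ∃ n', n = n' + 1 := by
        refine ⟨n - 1, ?_⟩
        have : (4:ℤ) ≤ (n:ℤ) := by omega
        omega
      have hcc : 2*m + 4 ≤ (n':ℤ) + 1 := by push_cast at hc; omega
      have hd2 : eul n' (m-1) + 1 ≤ eul n' (m-1+1) :=
        eul_strict n' (m-1) (by omega) (by omega)
      rw [show m - 1 + 1 = m from by ring] at hd2
      have hd1 : eul n' m ≤ eul n' (m+1) := eul_mono n' m (by omega) (by omega)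
      rw [eul_succ, eul_succ, show m + 1 - 1 = m from by ring]
      have c1 : (0:ℤ) ≤ m + 2 := by omega
      have c2 : (1:ℤ) ≤ (n':ℤ) + 1 - m := by omega
      nlinarith
  termination_by n m => n

lemma L1 (N M : ℕ) (g : ℕ → ℤ) :
    ∑ j ∈ range (M+1), (-1:ℤ)^j * ((N+1).choose j : ℤ) * g j
    = ∑ j ∈ range (M+1), (-1:ℤ)^j * (N.choose j : ℤ) * g j
      - ∑ j ∈ range M, (-1:ℤ)^j * (N.choose j : ℤ) * g (j+1) := by
  rw [Finset.sum_range_succ', Finset.sum_range_succ'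
    (fun j => (-1:ℤ)^j * (N.choose j : ℤ) * g j)]
  have h : ∀ j, (-1:ℤ)^(j+1) * ((N+1).choose (j+1) : ℤ) * g (j+1)
      = (-1:ℤ)^(j+1) * (N.choose (j+1) : ℤ) * g (j+1)
        - (-1:ℤ)^j * (N.choose j : ℤ) * g (j+1) := by
    intro j
    rw [Nat.choose_succ_succ]
    push_cast
    ring
  rw [Finset.sum_congr rfl (fun j _ => h j), Finset.sum_sub_distrib]
  simp
  ring

lemma L2 (N M : ℕ) (g : ℕ → ℤ) :
    ∑ j ∈ range (M+1), (-1:ℤ)^j * (j : ℤ) * ((N+1).choose j : ℤ) * g j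
    = -((N:ℤ)+1) * ∑ j ∈ range M, (-1:ℤ)^j * (N.choose j : ℤ) * g (j+1) := by
  rw [Finset.sum_range_succ']
  have h : ∀ j, (-1:ℤ)^(j+1) * ((j+1 : ℕ) : ℤ) * ((N+1).choose (j+1) : ℤ) * g (j+1)
      = -((N:ℤ)+1) * ((-1:ℤ)^j * (N.choose j : ℤ) * g (j+1)) := by
    intro j
    have hc : ((N:ℤ)+1) * (N.choose j : ℤ) = ((N+1).choose (j+1) : ℤ) * ((j:ℤ)+1) := by
      exact_mod_cast congrArg (Nat.cast : ℕ → ℤ) (Nat.add_one_mul_choose_eq N j)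
    push_cast
    rw [pow_succ]
    linear_combination (-1:ℤ)^j * g (j+1) * hc
  rw [Finset.sum_congr rfl (fun j _ => h j)]
  simp [← Finset.mul_sum]

def Wf (n m : ℕ) : ℤ :=
  ∑ j ∈ range (m+1), (-1:ℤ)^j * ((n+1).choose j : ℤ) * ((m:ℤ) + 1 - j)^n
lemma Wrec (n m : ℕ) :
    Wf (n+1) (m+1) = ((m:ℤ)+2) * Wf n (m+1) + ((n:ℤ) - m) * Wf n m := by
  have hLHS : Wf (n+1) (m+1)
      = ∑ j ∈ range (m+1+1), (-1:ℤ)^j * ((n+1+1).choose j : ℤ) * ((m:ℤ)+2-(j:ℤ))^(n+1) := by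
    rw [Wf]
    refine Finset.sum_congr rfl fun j _ => ?_
    push_cast; ring
  have key := L1 (n+1) (m+1) (fun j => ((m:ℤ)+2-(j:ℤ))^(n+1))
  beta_reduce at key
  rw [hLHS, key]
  -- Now handle S1' and S2'
  have h2 : ∑ j ∈ range (m+1+1), (-1:ℤ)^j * ((n+1).choose j : ℤ) * ((m:ℤ)+2-(j:ℤ))^(n+1)
      = ((m:ℤ)+2) * Wf n (m+1)
        + ((n:ℤ)+1) * ∑ j ∈ range (m+1), (-1:ℤ)^j * (n.choose j : ℤ) * ((m:ℤ)+1-(j:ℤ))^n := by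
    have e : ∀ j ∈ range (m+1+1), (-1:ℤ)^j * ((n+1).choose j : ℤ) * ((m:ℤ)+2-(j:ℤ))^(n+1)
        = ((m:ℤ)+2) * ((-1:ℤ)^j * ((n+1).choose j : ℤ) * ((m:ℤ)+2-(j:ℤ))^n)
          - ((-1:ℤ)^j * (j:ℤ) * ((n+1).choose j : ℤ) * ((m:ℤ)+2-(j:ℤ))^n) := by
      intro j _; rw [pow_succ]; ring
    rw [Finset.sum_congr rfl e, Finset.sum_sub_distrib, ← Finset.mul_sum]
    have l2 := L2 n (m+1) (fun j => ((m:ℤ)+2-(j:ℤ))^n)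
    beta_reduce at l2
    rw [l2]
    have t1 : ∑ j ∈ range (m+1+1), (-1:ℤ)^j * ((n+1).choose j : ℤ) * ((m:ℤ)+2-(j:ℤ))^n
        = Wf n (m+1) := by
      rw [Wf]
      refine Finset.sum_congr rfl fun j _ => ?_
      push_cast; ring
    have t2 : ∑ j ∈ range (m+1), (-1:ℤ)^j * (n.choose j : ℤ) * ((m:ℤ)+2-((j:ℤ)+1))^n
        = ∑ j ∈ range (m+1), (-1:ℤ)^j * (n.choose j : ℤ) * ((m:ℤ)+1-(j:ℤ))^n := by
      refine Finset.sum_congr rfl fun j _ => ?_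
      ring_nf
    rw [t1]
    push_cast
    push_cast at t2
    rw [t2]
    ring
  have h3 : ∑ j ∈ range (m+1), (-1:ℤ)^j * ((n+1).choose j : ℤ) * ((m:ℤ)+2-((j:ℕ)+1:ℕ))^(n+1)
      = ((m:ℤ)+1) * Wf n m
        + ((n:ℤ)+1) * ∑ j ∈ range m, (-1:ℤ)^j * (n.choose j : ℤ) * ((m:ℤ)-(j:ℤ))^n := by
    have e : ∀ j ∈ range (m+1), (-1:ℤ)^j * ((n+1).choose j : ℤ) * ((m:ℤ)+2-((j:ℕ)+1:ℕ))^(n+1)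
        = ((m:ℤ)+1) * ((-1:ℤ)^j * ((n+1).choose j : ℤ) * ((m:ℤ)+1-(j:ℤ))^n)
          - ((-1:ℤ)^j * (j:ℤ) * ((n+1).choose j : ℤ) * ((m:ℤ)+1-(j:ℤ))^n) := by
      intro j _
      push_cast
      rw [pow_succ, show (m:ℤ)+2-((j:ℤ)+1) = (m:ℤ)+1-(j:ℤ) from by ring]
      ring
    rw [Finset.sum_congr rfl e, Finset.sum_sub_distrib, ← Finset.mul_sum]
    have l2 := L2 n m (fun j => ((m:ℤ)+1-(j:ℤ))^n)
    beta_reduce at l2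
    rw [l2]
    have t1 : ∑ j ∈ range (m+1), (-1:ℤ)^j * ((n+1).choose j : ℤ) * ((m:ℤ)+1-(j:ℤ))^n
        = Wf n m := by rw [Wf]
    have t2 : ∑ j ∈ range m, (-1:ℤ)^j * (n.choose j : ℤ) * ((m:ℤ)+1-((j:ℕ)+1:ℕ))^n
        = ∑ j ∈ range m, (-1:ℤ)^j * (n.choose j : ℤ) * ((m:ℤ)-(j:ℤ))^n := by
      refine Finset.sum_congr rfl fun j _ => ?_
      push_cast
      ring_nf
    rw [t1]
    push_cast
    push_cast at t2
    rw [t2]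
    ring
  have h1 : Wf n m
      = ∑ j ∈ range (m+1), (-1:ℤ)^j * (n.choose j : ℤ) * ((m:ℤ)+1-(j:ℤ))^n
        - ∑ j ∈ range m, (-1:ℤ)^j * (n.choose j : ℤ) * ((m:ℤ)-(j:ℤ))^n := by
    have l1 := L1 n m (fun j => ((m:ℤ)+1-(j:ℤ))^n)
    beta_reduce at l1
    rw [Wf, l1]
    congr 1
    refine Finset.sum_congr rfl fun j _ => ?_
    push_cast
    ring_nf
  rw [h2]
  have h3' : ∑ j ∈ range (m+1), (-1:ℤ)^j * ((n+1).choose j : ℤ) * ((m:ℤ)+2-((j:ℕ)+1:ℕ))^(n+1)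
      = ∑ j ∈ range (m+1), (-1:ℤ)^j * ((n+1).choose j : ℤ) * ((m:ℤ)+2-(((j+1):ℕ):ℤ))^(n+1) := by
    refine Finset.sum_congr rfl fun j _ => ?_
    push_cast
    ring_nf
  rw [← h3', h3]
  linear_combination (-((n:ℤ)+1)) * h1
lemma Wf_def (n m : ℕ) : Wf n m =
  ∑ j ∈ range (m+1), (-1:ℤ)^j * ((n+1).choose j : ℤ) * ((m:ℤ) + 1 - j)^n := rfl

lemma sum_choose_one : ∀ m : ℕ,
    ∑ j ∈ range (m+1), (-1:ℤ)^j * ((Nat.choose 1 j : ℕ) : ℤ) = if m = 0 then 1 else 0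
  | 0 => by simp
  | (m+1) => by
    rw [Finset.sum_range_succ, sum_choose_one m]
    rcases Nat.eq_zero_or_pos m with rfl | hm
    · norm_num
    · rw [Nat.choose_eq_zero_of_lt (by omega)]
      simp [Nat.pos_iff_ne_zero.1 hm]

lemma eul_eq_Wf : ∀ n m : ℕ, eul n (m : ℤ) = Wf n m
  | 0, m => by
    rw [Wf_def]
    simp only [pow_zero, mul_one, Nat.zero_add]
    rw [sum_choose_one m, eul_zero_def]
    simp
  | (n+1), m => by
    rcases Nat.eq_zero_or_pos m with rfl | hm
    · rw [Wf_def]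
      simp [eul_zero]
    · obtain ⟨m', rfl⟩ : ∃ m', m = m'+1 := ⟨m-1, by omega⟩
      have e1 : ((m'+1:ℕ):ℤ) - 1 = (m':ℤ) := by push_cast; ring
      rw [eul_succ, e1, eul_eq_Wf n (m'+1), eul_eq_Wf n m', Wrec]
      push_cast; ring

lemma Sz_le (k : ℕ) (hk : 2 ≤ k) :
    ∑ j ∈ range k, (-1:ℤ)^j * ((2*k+1).choose j : ℤ) * ((k:ℤ) - j)^(2*k-2) ≤ -1 := by
  obtain ⟨k', rfl⟩ : ∃ k', k = k'+2 := ⟨k-2, by omega⟩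
  set g : ℕ → ℤ := fun j => ((k':ℤ)+2-j)^(2*k'+2) with hg
  have hgoal : ∑ j ∈ range (k'+2), (-1:ℤ)^j * ((2*(k'+2)+1).choose j : ℤ)
        * (((k'+2:ℕ):ℤ) - j)^(2*(k'+2)-2)
      = ∑ j ∈ range (k'+1+1), (-1:ℤ)^j * (((2*k'+4)+1).choose j : ℤ) * g j := by
    refine Finset.sum_congr (by ring_nf) fun j _ => ?_
    rw [hg]
    have h1 : 2*(k'+2)+1 = (2*k'+4)+1 := by ring
    have h2 : 2*(k'+2)-2 = 2*k'+2 := by omega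
    rw [h1, h2]
    push_cast; ring
  rw [hgoal, L1 (2*k'+4) (k'+1) g]
  have hA : ∑ j ∈ range (k'+1+1), (-1:ℤ)^j * ((2*k'+4).choose j : ℤ) * g j
      = ∑ j ∈ range (k'+1+1), (-1:ℤ)^j * (((2*k'+3)+1).choose j : ℤ) * g j := by
    refine Finset.sum_congr rfl fun j _ => ?_
    norm_num [show 2*k'+4 = (2*k'+3)+1 from by ring]
  have hB' : ∑ j ∈ range (k'+1), (-1:ℤ)^j * ((2*k'+4).choose j : ℤ) * g (j+1)
      = ∑ j ∈ range (k'+0+1), (-1:ℤ)^j * (((2*k'+3)+1).choose j : ℤ) * (fun j => g (j+1)) j := by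
    refine Finset.sum_congr (by ring_nf) fun j _ => ?_
    norm_num [show 2*k'+4 = (2*k'+3)+1 from by ring]
  rw [hA, hB', L1 (2*k'+3) (k'+1) g, L1 (2*k'+3) (k'+0) (fun j => g (j+1))]
  beta_reduce
  -- identify with Wf values
  have hWA : ∑ j ∈ range (k'+1+1), (-1:ℤ)^j * ((2*k'+3).choose j : ℤ) * g j
      = Wf (2*k'+2) (k'+1) := by
    rw [Wf_def, show 2*k'+2+1 = 2*k'+3 from by ring]
    refine Finset.sum_congr rfl fun j _ => ?_
    rw [hg]
    push_cast; ring
  have hWB : ∑ j ∈ range (k'+1), (-1:ℤ)^j * ((2*k'+3).choose j : ℤ) * g (j+1)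
      = Wf (2*k'+2) k' := by
    rw [Wf_def, show 2*k'+2+1 = 2*k'+3 from by ring]
    refine Finset.sum_congr rfl fun j _ => ?_
    rw [hg]
    push_cast; ring
  have hC2 : ∑ j ∈ range (k'+0), (-1:ℤ)^j * ((2*k'+3).choose j : ℤ) * g (j+1+1)
      = eul (2*k'+2) ((k':ℤ) - 1) := by
    rcases Nat.eq_zero_or_pos k' with rfl | hk'
    · simp [eul_neg (2*0+2) (-1) (by norm_num)]
    · obtain ⟨k'', rfl⟩ : ∃ k'', k' = k''+1 := ⟨k'-1, by omega⟩
      have : ((k''+1:ℕ):ℤ) - 1 = ((k'':ℕ):ℤ) := by push_cast; ring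
      rw [this, eul_eq_Wf (2*(k''+1)+2) k'', Wf_def,
        show 2*(k''+1)+2+1 = 2*(k''+1)+3 from by ring]
      refine Finset.sum_congr rfl fun j _ => ?_
      rw [hg]
      push_cast; ring
  rw [hWA, hWB, hC2]
  -- symmetry: Wf (2k'+2) (k'+1) = Wf (2k'+2) k'
  have hsym : Wf (2*k'+2) (k'+1) = Wf (2*k'+2) k' := by
    rw [← eul_eq_Wf, ← eul_eq_Wf]
    have := eul_symm (2*k'+2) (by omega) ((k'+1 : ℕ) : ℤ)
    have e : ((2*k'+2:ℕ):ℤ) - 1 - ((k'+1:ℕ):ℤ) = ((k':ℕ):ℤ) := by push_cast; ring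
    rw [e] at this
    exact this
  have hstrict : eul (2*k'+2) ((k':ℤ)-1) + 1 ≤ eul (2*k'+2) ((k':ℤ)) := by
    have := eul_strict (2*k'+2) ((k':ℤ)-1) (by omega) (by push_cast; omega)
    rwa [show (k':ℤ) - 1 + 1 = (k':ℤ) from by ring] at this
  rw [hsym, ← eul_eq_Wf]
  linarith
lemma Ft_nonneg (k : ℕ) (hk : 2 ≤ k) :
    ∃ N : ℕ, ∀ t : ℕ, N ≤ t →
      0 ≤ ∑ j ∈ range k, (-1:ℤ)^(j+1) * ((2*k+1).choose j : ℤ)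
            * (((k-j)*t + (k-2)).choose (2*k-2) : ℤ) := by
  set lin : ℕ → ℝ[X] := fun j => Polynomial.C ((k:ℝ) - j) * Polynomial.X + Polynomial.C ((k:ℝ) - 2)
    with hlin
  set P : ℝ[X] := ∑ j ∈ range k,
      Polynomial.C ((-1:ℝ)^(j+1) * ((2*k+1).choose j : ℝ)) *
        (descPochhammer ℝ (2*k-2)).comp (lin j) with hP
  have hne : ∀ j, j < k → ((k:ℝ) - j) ≠ 0 := by
    intro j hj
    have : (j:ℝ) < (k:ℝ) := by exact_mod_cast hj
    linarith
  have hdegj : ∀ j, j < k → ((descPochhammer ℝ (2*k-2)).comp (lin j)).natDegree = 2*k-2 := by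
    intro j hj
    rw [natDegree_comp, descPochhammer_natDegree, hlin, natDegree_linear (hne j hj), mul_one]
  have hcoeffj : ∀ j, j < k →
      ((descPochhammer ℝ (2*k-2)).comp (lin j)).coeff (2*k-2) = ((k:ℝ) - j)^(2*k-2) := by
    intro j hj
    have h1 : (lin j).natDegree ≠ 0 := by
      rw [hlin, natDegree_linear (hne j hj)]; norm_num
    have h2 := congrArg (fun n => ((descPochhammer ℝ (2*k-2)).comp (lin j)).coeff n) (hdegj j hj)
    rw [coeff_natDegree] at h2
    rw [← h2, leadingCoeff_comp h1, (monic_descPochhammer ℝ (2*k-2)).leadingCoeff, one_mul, hlin,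
      leadingCoeff_linear (hne j hj), descPochhammer_natDegree]
  have coeffP : P.coeff (2*k-2)
      = ∑ j ∈ range k, (-1:ℝ)^(j+1) * ((2*k+1).choose j : ℝ) * ((k:ℝ) - j)^(2*k-2) := by
    rw [hP, finset_sum_coeff]
    refine Finset.sum_congr rfl fun j hj => ?_
    rw [coeff_C_mul, hcoeffj j (Finset.mem_range.mp hj)]
  have hcoeff_pos : 0 < P.coeff (2*k-2) := by
    have h1 := Sz_le k hk
    have h2 : ((∑ j ∈ range k, (-1:ℤ)^j * ((2*k+1).choose j : ℤ) * ((k:ℤ) - j)^(2*k-2) : ℤ) : ℝ)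
        ≤ -1 := by exact_mod_cast h1
    have h3 : P.coeff (2*k-2)
        = -((∑ j ∈ range k, (-1:ℤ)^j * ((2*k+1).choose j : ℤ) * ((k:ℤ) - j)^(2*k-2) : ℤ) : ℝ) := by
      rw [coeffP]
      push_cast
      rw [← Finset.sum_neg_distrib]
      refine Finset.sum_congr rfl fun j _ => ?_
      ring
    rw [h3]
    linarith
  have hndeg : P.natDegree = 2*k-2 := by
    refine le_antisymm ?_ (le_natDegree_of_ne_zero (ne_of_gt hcoeff_pos))
    refine natDegree_sum_le_of_forall_le _ _ fun j hj => ?_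
    exact le_trans (natDegree_C_mul_le _ _) (le_of_eq (hdegj j (Finset.mem_range.mp hj)))
  have hlead : 0 < P.leadingCoeff := by
    have : P.leadingCoeff = P.coeff (2*k-2) := by rw [← coeff_natDegree, hndeg]
    rw [this]; exact hcoeff_pos
  have hdegpos : 0 < P.degree := by
    rw [← natDegree_pos_iff_degree_pos, hndeg]
    omega
  have htend := P.tendsto_atTop_of_leadingCoeff_nonneg hdegpos hlead.le
  have hev : ∀ᶠ t : ℕ in atTop, 0 ≤ Polynomial.eval ((t:ℝ)) P :=
    (htend.comp tendsto_natCast_atTop_atTop).eventually_ge_atTop 0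
  obtain ⟨N, hN⟩ := Filter.eventually_atTop.mp hev
  refine ⟨N, fun t ht => ?_⟩
  have heval : Polynomial.eval (t:ℝ) P
      = ((2*k-2).factorial : ℝ) * ((∑ j ∈ range k, (-1:ℤ)^(j+1) * ((2*k+1).choose j : ℤ)
          * (((k-j)*t + (k-2)).choose (2*k-2) : ℤ) : ℤ) : ℝ) := by
    rw [hP, Polynomial.eval_finset_sum]
    push_cast
    rw [Finset.mul_sum]
    refine Finset.sum_congr rfl fun j hj => ?_
    have hjk : j < k := Finset.mem_range.mp hj
    rw [Polynomial.eval_mul, Polynomial.eval_C, Polynomial.eval_comp, hlin]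
    simp only [Polynomial.eval_add, Polynomial.eval_mul, Polynomial.eval_C, Polynomial.eval_X]
    have harg : ((k:ℝ) - (j:ℝ)) * (t:ℝ) + ((k:ℝ) - 2) = (((k-j)*t + (k-2) : ℕ) : ℝ) := by
      push_cast [Nat.cast_sub hjk.le, Nat.cast_sub hk]
      ring
    rw [harg, descPochhammer_eval_eq_descFactorial,
      Nat.descFactorial_eq_factorial_mul_choose]
    push_cast
    ring
  have h0 := hN t ht
  rw [heval] at h0
  have hf : (0:ℝ) < ((2*k-2).factorial : ℝ) := by positivity
  have := (mul_nonneg_iff_of_pos_left hf).mp h0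
  exact_mod_cast this

/-- The Hilbert function in degree `i` of `K[x_1,…,x_r]/⟨l_1^t,…,l_{r+1}^t⟩` for generic
linear forms (Lemma C of Stanley/Iarrobino), when the displayed quantity is positive:
`H(r,t,i) = C(r-1+i, r-1) + ∑_{j=1}^{min(⌊i/t⌋, r)} (-1)^j C(r-1+i-tj, r-1) C(r+1, j)`,
with the convention `C(a,b) = 0` for `a < b` or `a < 0`. -/
def hilb (r t i : ℕ) : ℤ :=
  ((r - 1 + i).choose (r - 1) : ℤ) +
    ∑ j ∈ Finset.Icc 1 (min (i / t) r),
      (-1 : ℤ) ^ j * ((r - 1 + i - t * j).choose (r - 1)) * ((r + 1).choose j)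

lemma hilb_diff (k t : ℕ) (hk : 2 ≤ k) (ht : k + 1 ≤ t) :
    hilb (2*k) t (k*(t-1)-1) - hilb (2*k) t (k*(t-1)-1+1)
    = ∑ j ∈ range k, (-1:ℤ)^(j+1) * ((2*k+1).choose j : ℤ)
        * (((k-j)*t + (k-2)).choose (2*k-2) : ℤ) := by
  obtain ⟨k'', rfl⟩ : ∃ k'', k = k''+2 := ⟨k-2, by omega⟩
  obtain ⟨t', rfl⟩ : ∃ t', t = t'+1 := ⟨t-1, by omega⟩
  have hkt' : k''+2 ≤ t' := by omega
  have hsimp : (k''+2)*(t'+1-1)-1 = (k''+2)*t'-1 := by rw [Nat.add_sub_cancel]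
  rw [hsimp]
  have hA1' : 1 ≤ (k''+2)*t' := Nat.one_le_iff_ne_zero.mpr
    (Nat.mul_ne_zero (by omega) (by omega))
  set A := (k''+2)*t' with hA
  have hAz : (A:ℤ) = ((k'':ℤ)+2)*(t':ℤ) := by rw [hA]; push_cast; ring
  rw [show 2*(k''+2)+1 = 2*k''+5 from by ring, show 2*(k''+2)-2 = 2*k''+2 from by omega,
    show k''+2-2 = k'' from by omega]
  -- division facts
  have div1 : (A-1) / (t'+1) = k''+1 := by
    apply Nat.div_eq_of_lt_le
    · have h : (k''+1)*(t'+1) + 1 ≤ (k''+2)*t' := by nlinarith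
      rw [← hA] at h
      omega
    · have h : (k''+2)*t' < (k''+1+1)*(t'+1) := by nlinarith
      rw [← hA] at h
      omega
  have div2 : (A-1+1) / (t'+1) = k''+1 := by
    rw [Nat.sub_add_cancel hA1']
    apply Nat.div_eq_of_lt_le
    · have h : (k''+1)*(t'+1) ≤ (k''+2)*t' := by nlinarith
      rw [← hA] at h
      exact h
    · have h : (k''+2)*t' < (k''+1+1)*(t'+1) := by nlinarith
      rw [← hA] at h
      exact h
  have hIcc : Finset.Icc 1 (k''+1) = Finset.Ico 1 (k''+2) :=
    (Finset.Ico_add_one_right_eq_Icc 1 (k''+1)).symm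
  have E1 : hilb (2*(k''+2)) (t'+1) (A-1)
      = ((2*k''+3 + (A-1)).choose (2*k''+3) : ℤ)
        + ∑ j ∈ range (k''+1), (-1:ℤ)^(1+j)
            * ((2*k''+3 + (A-1) - (t'+1)*(1+j)).choose (2*k''+3) : ℤ)
            * ((2*k''+5).choose (1+j) : ℤ) := by
    rw [hilb, div1, min_eq_left (by omega), show 2*(k''+2)-1 = 2*k''+3 from by omega,
      show 2*(k''+2)+1 = 2*k''+5 from by ring, hIcc, Finset.sum_Ico_eq_sum_range,
      show k''+2-1 = k''+1 from by omega]
  have E2 : hilb (2*(k''+2)) (t'+1) (A-1+1)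
      = ((2*k''+3 + (A-1+1)).choose (2*k''+3) : ℤ)
        + ∑ j ∈ range (k''+1), (-1:ℤ)^(1+j)
            * ((2*k''+3 + (A-1+1) - (t'+1)*(1+j)).choose (2*k''+3) : ℤ)
            * ((2*k''+5).choose (1+j) : ℤ) := by
    rw [hilb, div2, min_eq_left (by omega), show 2*(k''+2)-1 = 2*k''+3 from by omega,
      show 2*(k''+2)+1 = 2*k''+5 from by ring, hIcc, Finset.sum_Ico_eq_sum_range,
      show k''+2-1 = k''+1 from by omega]
  rw [E1, E2]
  have Rsplit : ∑ j ∈ range (k''+2), (-1:ℤ)^(j+1) * ((2*k''+5).choose j : ℤ)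
        * (((k''+2-j)*(t'+1) + k'').choose (2*k''+2) : ℤ)
      = (∑ j ∈ range (k''+1), (-1:ℤ)^(j+1+1) * ((2*k''+5).choose (j+1) : ℤ)
          * (((k''+2-(j+1))*(t'+1) + k'').choose (2*k''+2) : ℤ))
        + (-1:ℤ)^(0+1) * ((2*k''+5).choose 0 : ℤ)
          * (((k''+2-0)*(t'+1) + k'').choose (2*k''+2) : ℤ) :=
    Finset.sum_range_succ' _ (k''+1)
  rw [Rsplit]
  have hkey : ∀ j ∈ range (k''+1),
      (-1:ℤ)^(1+j) * ((2*k''+3 + (A-1) - (t'+1)*(1+j)).choose (2*k''+3) : ℤ)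
          * ((2*k''+5).choose (1+j) : ℤ)
        - (-1:ℤ)^(1+j) * ((2*k''+3 + (A-1+1) - (t'+1)*(1+j)).choose (2*k''+3) : ℤ)
          * ((2*k''+5).choose (1+j) : ℤ)
      = (-1:ℤ)^(j+1+1) * ((2*k''+5).choose (j+1) : ℤ)
          * (((k''+2-(j+1))*(t'+1) + k'').choose (2*k''+2) : ℤ) := by
    intro j hj
    have hjk : j < k''+1 := Finset.mem_range.mp hj
    have hsubB : (t'+1)*(1+j) ≤ A := by
      rw [hA]
      nlinarith [Nat.mul_le_mul_right t' (show 1+j ≤ k''+1 from by omega)]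
    have e3 : 2*k''+3 + (A-1) - (t'+1)*(1+j) = (k''+2-(j+1))*(t'+1) + k'' := by
      have h1 : k''+2-(j+1) = k''+1-j := by omega
      rw [h1]
      zify [hsubB.trans (by omega : A ≤ 2*k''+3 + (A-1)), hA1', show j ≤ k''+1 from by omega]
      linear_combination hAz
    have e2 : 2*k''+3 + (A-1+1) - (t'+1)*(1+j) = (2*k''+3 + (A-1) - (t'+1)*(1+j)) + 1 := by
      generalize hB : (t'+1)*(1+j) = B at hsubB ⊢
      omega
    rw [e2, e3, show 2*k''+3 = 2*k''+2+1 from by omega, Nat.choose_succ_succ']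
    push_cast
    ring
  have hS : (∑ j ∈ range (k''+1), (-1:ℤ)^(1+j)
        * ((2*k''+3 + (A-1) - (t'+1)*(1+j)).choose (2*k''+3) : ℤ)
        * ((2*k''+5).choose (1+j) : ℤ))
      - (∑ j ∈ range (k''+1), (-1:ℤ)^(1+j)
        * ((2*k''+3 + (A-1+1) - (t'+1)*(1+j)).choose (2*k''+3) : ℤ)
        * ((2*k''+5).choose (1+j) : ℤ))
      = ∑ j ∈ range (k''+1), (-1:ℤ)^(j+1+1) * ((2*k''+5).choose (j+1) : ℤ)
          * (((k''+2-(j+1))*(t'+1) + k'').choose (2*k''+2) : ℤ) := by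
    rw [← Finset.sum_sub_distrib]
    exact Finset.sum_congr rfl hkey
  have e : 2*k''+3 + (A-1) = (k''+2)*(t'+1) + k'' := by
    zify [hA1']
    linear_combination hAz
  have hC : ((2*k''+3 + (A-1+1)).choose (2*k''+3) : ℤ)
      = ((2*k''+3 + (A-1)).choose (2*k''+3) : ℤ)
        + (((k''+2)*(t'+1) + k'').choose (2*k''+2) : ℤ) := by
    have harg : 2*k''+3 + (A-1+1) = (2*k''+3 + (A-1)) + 1 := by omega
    rw [harg, show 2*k''+3 = 2*k''+2+1 from by omega, Nat.choose_succ_succ']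
    push_cast
    rw [show 2*k''+2+1 + (A-1) = (k''+2)*(t'+1) + k'' from by
      rw [show 2*k''+2+1 = 2*k''+3 from by omega]; exact e]
    ring
  have hF0 : (-1:ℤ)^(0+1) * ((2*k''+5).choose 0 : ℤ)
        * (((k''+2-0)*(t'+1) + k'').choose (2*k''+2) : ℤ)
      = -(((k''+2)*(t'+1) + k'').choose (2*k''+2) : ℤ) := by
    norm_num
  rw [hF0]
  linarith [hS, hC]

/-- For `k ≥ 2`, `r = 2k`, `c = k(t-1) - 1`, the inequality `H(2k,t,c) ≥ H(2k,t,c+1)`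
holds for all sufficiently large `t` (with `t ≥ k+1`). -/
theorem stmt_12 (k : ℕ) (hk : 2 ≤ k) :
    ∃ N : ℕ, ∀ t : ℕ, N ≤ t → k + 1 ≤ t →
      hilb (2 * k) t (k * (t - 1) - 1) ≥ hilb (2 * k) t (k * (t - 1) - 1 + 1) := by
  obtain ⟨N, hN⟩ := Ft_nonneg k hk
  refine ⟨N, fun t hNt hkt => ?_⟩
  have h1 := hN t hNt
  have h2 := hilb_diff k t hk hkt
  linarith
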